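/- (Blocking scaling lemma) Assume the continuum economy 𝓔_c satisfies continuity (A₁), concavity (A₃) and strong positivity (A₅) (inf over ω of each aᵢ(ω) exists and is > 0 in Y). Let f be a step allocation, f(t,·) = fᵢ for t ∈ Iᵢ. If f is privately blocked by some coalition in 𝓔_c, then f is privately blocked by a coalition A via a step function g with g(t,·) = gᵢ ∈ Lᵢ for t ∈ A ∩ Iᵢ, such that ∫_A (a(t,ω) − g(t,ω)) dμ(t) ≥ z for all ω ∈ Ω, where z > 0 is a fixed positive element of Y. -/

import Mathlib

open MeasureTheory

/-- The type of agent `t ∈ [0,1]`: `t ∈ Iᵢ` has type `i`. -/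
noncomputable def agentType (n : ℕ) (hn : 0 < n) (t : ℝ) : Fin n :=
  ⟨min ⌊t * n⌋₊ (n - 1), lt_of_le_of_lt (min_le_right _ _) (by omega)⟩

/-- The interval `Iᵢ` of type-`i` agents. -/
def typeInterval (n : ℕ) (i : Fin n) : Set ℝ :=
  if (i : ℕ) = n - 1 then Set.Icc (((i : ℕ) : ℝ) / n) 1
  else Set.Ico (((i : ℕ) : ℝ) / n) ((((i : ℕ) : ℝ) + 1) / n)

section Economy

variable {Y : Type*} [NormedAddCommGroup Y] [Lattice Y] [HasSolidNorm Y]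
  [IsOrderedAddMonoid Y] [NormedSpace ℝ Y] [CompleteSpace Y]
variable {Ω S' : Type*} [Fintype Ω]

/-- The set `Lᵢ` of `𝓕ᵢ`-measurable bundles `Ω → Y₊`, where the partition `𝓕ᵢ` is
encoded by the cell map `c i : Ω → S'`. -/
def measBundles (c : Ω → S') : Set (Ω → Y) :=
  {x : Ω → Y | (∀ ω, 0 ≤ x ω) ∧ ∀ ω ω', c ω = c ω' → x ω = x ω'}

/-- The ex ante expected utility `Vᵢ`. -/
def expUtility (U : Ω → Y → ℝ) (q : Ω → ℝ) (x : Ω → Y) : ℝ :=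
  ∑ ω, q ω * U ω (x ω)

/-- The coalition `A` privately blocks the allocation `f` via `g` in the equal-treatment
continuum economy `𝓔_c`. -/
def PrivatelyBlocks {n : ℕ} (hn : 0 < n) (c : Fin n → Ω → S')
    (U : Fin n → Ω → Y → ℝ) (q : Fin n → Ω → ℝ) (a : Fin n → Ω → Y)
    (f : ℝ → Ω → Y) (A : Set ℝ) (g : ℝ → Ω → Y) : Prop :=
  MeasurableSet A ∧ A ⊆ Set.Icc (0:ℝ) 1 ∧ 0 < volume A ∧
  (∀ t ∈ A, g t ∈ measBundles (c (agentType n hn t))) ∧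
  (∀ t ∈ A, expUtility (U (agentType n hn t)) (q (agentType n hn t)) (f t) <
    expUtility (U (agentType n hn t)) (q (agentType n hn t)) (g t)) ∧
  (∀ ω, IntegrableOn (fun t => g t ω) A volume) ∧
  (∀ ω, (∫ t in A, g t ω) ≤ ∫ t in A, a (agentType n hn t) ω)

end Economy

/-! ### Auxiliary lemmas -/

section BSLSmulOrder
variable {Y : Type*} [NormedAddCommGroup Y] [Lattice Y] [HasSolidNorm Y]
  [IsOrderedAddMonoid Y] [NormedSpace ℝ Y]

omit [NormedSpace ℝ Y] in
lemma BSL.nonneg_of_add_self {x : Y} (h : 0 ≤ x + x) : 0 ≤ x := by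
  have hdecomp : x⁺ - x⁻ = x := posPart_sub_negPart x
  have hinf : x⁺ ⊓ x⁻ = 0 := posPart_inf_negPart_eq_zero x
  have h1 : x⁻ + x⁻ ≤ x⁺ + x⁺ := by
    rw [← sub_nonneg]
    have e : (x⁺ + x⁺) - (x⁻ + x⁻) = (x⁺ - x⁻) + (x⁺ - x⁻) := by abel
    rw [e, hdecomp]; exact h
  have key : (x⁺ + x⁺) ⊓ (x⁻ + x⁻) ≤ x⁺ + x⁻ := by
    rw [← sub_nonpos]
    have e : (x⁺ + x⁺) ⊓ (x⁻ + x⁻) - (x⁺ + x⁻)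
        = ((x⁺ + x⁺) - (x⁺ + x⁻)) ⊓ ((x⁻ + x⁻) - (x⁺ + x⁻)) := by
      rw [sub_eq_add_neg, inf_add, ← sub_eq_add_neg, ← sub_eq_add_neg]
    have e2 : (x⁺ + x⁺) - (x⁺ + x⁻) = x⁺ - x⁻ := by abel
    have e3 : (x⁻ + x⁻) - (x⁺ + x⁻) = -(x⁺ - x⁻) := by abel
    rw [e, e2, e3, ← neg_nonneg, neg_inf, neg_neg]
    have habs : (0:Y) ≤ |x⁺ - x⁻| := by
      rw [← posPart_add_negPart]
      exact add_nonneg (posPart_nonneg _) (negPart_nonneg _)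
    rw [abs] at habs
    rwa [sup_comm]
  have h2 : x⁻ + x⁻ ≤ x⁺ + x⁻ := (inf_eq_right.mpr h1 ▸ key : x⁻ + x⁻ ≤ x⁺ + x⁻)
  have h3 : x⁻ ≤ x⁺ := by
    have := add_le_add_right h2 (-(x⁻)); simpa using this
  have h4 : x⁻ = 0 := by
    have h5 : x⁻ ⊓ x⁺ = x⁻ := inf_eq_left.mpr h3
    rw [inf_comm, hinf] at h5; exact h5.symm
  have hx : x = x⁺ := by conv_lhs => rw [← hdecomp, h4, sub_zero]
  rw [hx]; exact posPart_nonneg _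

lemma BSL.real_smul_nonneg {r : ℝ} (hr : 0 ≤ r) {y : Y} (hy : 0 ≤ y) : 0 ≤ r • y := by
  set D : Set ℝ := {s : ℝ | 0 ≤ s • y} with hD
  have hclosed : IsClosed D := by
    have h : D = (fun s : ℝ => s • y) ⁻¹' {v : Y | 0 ≤ v} := rfl
    rw [h]
    exact IsClosed.preimage (by fun_prop) isClosed_nonneg
  have hhalf : ∀ s ∈ D, s / 2 ∈ D := by
    intro s hs
    refine BSL.nonneg_of_add_self ?_
    have h : (s/2) • y + (s/2) • y = s • y := by rw [← add_smul]; ring_nf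
    rw [h]; exact hs
  have hadd : ∀ s ∈ D, ∀ u ∈ D, s + u ∈ D := by
    intro s hs u hu
    simp only [D, Set.mem_setOf_eq] at *
    rw [add_smul]; exact add_nonneg hs hu
  have hone : (1:ℝ) ∈ D := by simp only [D, Set.mem_setOf_eq, one_smul]; exact hy
  have hzero : (0:ℝ) ∈ D := by simp [D]
  have hpow : ∀ m : ℕ, ((2:ℝ)^m)⁻¹ ∈ D := by
    intro m; induction m with
    | zero => simpa using hone
    | succ m ih =>
      have h := hhalf _ ih
      have e : ((2:ℝ)^m)⁻¹ / 2 = ((2:ℝ)^(m+1))⁻¹ := by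
        rw [pow_succ]; field_simp
      rwa [e] at h
  have hdy : ∀ (k m : ℕ), (k : ℝ) * ((2:ℝ)^m)⁻¹ ∈ D := by
    intro k m; induction k with
    | zero => simpa using hzero
    | succ k ih =>
      have h := hadd _ ih _ (hpow m)
      have e : (k:ℝ) * ((2:ℝ)^m)⁻¹ + ((2:ℝ)^m)⁻¹ = ((k+1 : ℕ):ℝ) * ((2:ℝ)^m)⁻¹ := by
        push_cast; ring
      rwa [e] at h
  have htend : Filter.Tendsto (fun m : ℕ => (⌊r * 2^m⌋₊ : ℝ) * ((2:ℝ)^m)⁻¹)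
      Filter.atTop (nhds r) := by
    have hinv : Filter.Tendsto (fun m : ℕ => ((2:ℝ)^m)⁻¹) Filter.atTop (nhds 0) := by
      have h0 : Filter.Tendsto (fun m : ℕ => ((2:ℝ)⁻¹)^m) Filter.atTop (nhds 0) :=
        tendsto_pow_atTop_nhds_zero_of_lt_one (by norm_num) (by norm_num)
      exact h0.congr (fun m => by rw [inv_pow])
    refine tendsto_of_tendsto_of_tendsto_of_le_of_le
      (g := fun m : ℕ => r - ((2:ℝ)^m)⁻¹) (h := fun _ => r) ?_ tendsto_const_nhds ?_ ?_
    · simpa using tendsto_const_nhds.sub hinv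
    · intro m
      have h2m : (0:ℝ) < 2^m := by positivity
      have hfl : r * 2^m < (⌊r * 2^m⌋₊ : ℝ) + 1 := Nat.lt_floor_add_one _
      rw [sub_le_iff_le_add]
      rw [← mul_le_mul_iff_of_pos_right h2m]
      calc r * 2^m ≤ (⌊r * 2^m⌋₊ : ℝ) + 1 := hfl.le
      _ = ((⌊r * 2^m⌋₊ : ℝ) * (2^m)⁻¹ + (2^m)⁻¹) * 2^m := by field_simp
    · intro m
      have h2m : (0:ℝ) < 2^m := by positivity
      have hfl : (⌊r * 2^m⌋₊ : ℝ) ≤ r * 2^m := Nat.floor_le (by positivity)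
      rw [← mul_le_mul_iff_of_pos_right h2m]
      calc (⌊r * 2^m⌋₊ : ℝ) * (2^m)⁻¹ * 2^m = (⌊r * 2^m⌋₊ : ℝ) := by field_simp
      _ ≤ r * 2^m := hfl
  exact hclosed.mem_of_tendsto htend (Filter.Eventually.of_forall fun m => hdy _ _)

lemma BSL.real_smul_le_smul {r : ℝ} (hr : 0 ≤ r) {x y : Y} (hxy : x ≤ y) : r • x ≤ r • y := by
  rw [← sub_nonneg, ← smul_sub]
  exact BSL.real_smul_nonneg hr (sub_nonneg.mpr hxy)

lemma BSL.real_smul_pos {r : ℝ} (hr : 0 < r) {y : Y} (hy : 0 < y) : 0 < r • y := by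
  refine lt_of_le_of_ne (BSL.real_smul_nonneg hr.le hy.le) ?_
  intro h
  have h2 : y = 0 := by
    have h3 := congrArg (fun v => r⁻¹ • v) h
    simpa [smul_smul, inv_mul_cancel₀ hr.ne'] using h3.symm
  exact hy.ne' h2

end BSLSmulOrder

section BSLMeas
variable {Y : Type*} [NormedAddCommGroup Y] [Lattice Y] [HasSolidNorm Y]
  [IsOrderedAddMonoid Y] [NormedSpace ℝ Y]

omit [NormedSpace ℝ Y] in
/-- Composition of a function continuous on the positive cone with a strongly measurable
function taking values in the cone. -/
lemma BSL.stronglyMeasurable_comp_cone {α : Type*} [MeasurableSpace α] {h : α → Y}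
    (hh : StronglyMeasurable h) (hr : ∀ t, 0 ≤ h t) {F : Y → ℝ}
    (hF : ContinuousOn F {y : Y | 0 ≤ y}) : StronglyMeasurable fun t => F (h t) := by
  refine ⟨fun k => (hh.approx k).map (fun y => F (y ⊔ 0)), fun t => ?_⟩
  have htendy : Filter.Tendsto (fun k => (hh.approx k) t) Filter.atTop (nhds (h t)) :=
    hh.tendsto_approx t
  have hsup : Filter.Tendsto (fun k => (hh.approx k) t ⊔ 0) Filter.atTop (nhds (h t ⊔ 0)) :=
    (continuous_id.sup continuous_const).continuousAt.tendsto.comp htendy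
  rw [sup_eq_left.mpr (hr t)] at hsup
  have hmem : ∀ k, (hh.approx k) t ⊔ 0 ∈ {y : Y | 0 ≤ y} := fun k => le_sup_right
  have hcw : Filter.Tendsto (fun k => (hh.approx k) t ⊔ 0) Filter.atTop
      (nhdsWithin (h t) {y : Y | 0 ≤ y}) := by
    rw [tendsto_nhdsWithin_iff]
    exact ⟨hsup, Filter.Eventually.of_forall hmem⟩
  have := (hF (h t) (hr t)).tendsto.comp hcw
  simpa [SimpleFunc.map_apply, Function.comp_def] using this

omit [NormedSpace ℝ Y] in
/-- a.e. strong measurability of a finite-product-valued function from coordinates. -/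
lemma BSL.aestronglyMeasurable_pi {α : Type*} [MeasurableSpace α] {μ : Measure α}
    {ι : Type*} [Fintype ι] {f : α → ι → Y}
    (h : ∀ i, AEStronglyMeasurable (fun t => f t i) μ) : AEStronglyMeasurable f μ := by
  classical
  revert f
  suffices H : ∀ (m : ℕ) (g : α → Fin m → Y),
      (∀ i, AEStronglyMeasurable (fun t => g t i) μ) → AEStronglyMeasurable g μ by
    intro f h
    obtain ⟨m, ⟨e⟩⟩ : ∃ m : ℕ, Nonempty (ι ≃ Fin m) := ⟨Fintype.card ι, ⟨Fintype.equivFin ι⟩⟩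
    have hG : AEStronglyMeasurable (fun t => (fun j : Fin m => f t (e.symm j))) μ :=
      H m _ (fun j => h (e.symm j))
    have hcont : Continuous (fun v : Fin m → Y => (fun i : ι => v (e i))) :=
      continuous_pi (fun i => continuous_apply (e i))
    have h2 := hcont.comp_aestronglyMeasurable hG
    refine h2.congr (Filter.Eventually.of_forall fun t => ?_)
    funext i; simp
  intro m
  induction m with
  | zero =>
    intro g _
    have h0 : g = fun _ => (fun i : Fin 0 => i.elim0) := by
      funext t i; exact i.elim0
    rw [h0]; exact aestronglyMeasurable_const
  | succ m ih =>
    intro g hg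
    have hG : AEStronglyMeasurable
        (fun t => ((g t 0, fun j : Fin m => g t j.succ) : Y × (Fin m → Y))) μ :=
      (hg 0).prodMk (ih _ (fun j => hg j.succ))
    have hcont : Continuous (fun p : Y × (Fin m → Y) => (Fin.cons p.1 p.2 : Fin (m+1) → Y)) := by
      refine continuous_pi (fun i => ?_)
      refine Fin.cases ?_ ?_ i
      · simpa using continuous_fst
      · intro j; simpa [Function.comp_def] using (continuous_apply j).comp continuous_snd
    have h2 := hcont.comp_aestronglyMeasurable hG
    refine h2.congr (Filter.Eventually.of_forall fun t => ?_)
    funext i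
    refine Fin.cases ?_ ?_ i
    · simp
    · intro j; simp

end BSLMeas

lemma BSL.measurable_agentType (n : ℕ) (hn : 0 < n) : Measurable (agentType n hn) := by
  have h1 : Measurable fun t : ℝ => ⌊t * (n:ℝ)⌋₊ :=
    Nat.measurable_floor.comp (measurable_id.mul_const _)
  exact (measurable_from_top (f := fun k : ℕ =>
    (⟨min k (n-1), lt_of_le_of_lt (min_le_right _ _) (by omega)⟩ : Fin n))).comp h1

section BSLStep
variable {E : Type*} [NormedAddCommGroup E] [NormedSpace ℝ E] [CompleteSpace E]
variable {n : ℕ} {hn : 0 < n}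

lemma BSL.sum_indicator_decomp (F : ℝ → E) (t : ℝ) :
    F t = ∑ i : Fin n, (agentType n hn ⁻¹' {i}).indicator F t := by
  classical
  rw [Finset.sum_eq_single (agentType n hn t)]
  · simp [Set.indicator_of_mem, Set.mem_preimage]
  · intro i _ hne
    apply Set.indicator_of_notMem
    simp only [Set.mem_preimage, Set.mem_singleton_iff]
    exact fun h => hne h.symm
  · simp

lemma BSL.sum_indicator_decomp' (h : Fin n → E) (t : ℝ) :
    h (agentType n hn t)
      = ∑ i : Fin n, (agentType n hn ⁻¹' {i}).indicator (fun _ => h i) t := by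
  classical
  rw [Finset.sum_eq_single (agentType n hn t)]
  · simp [Set.indicator_of_mem, Set.mem_preimage]
  · intro i _ hne
    apply Set.indicator_of_notMem
    simp only [Set.mem_preimage, Set.mem_singleton_iff]
    exact fun h => hne h.symm
  · simp

lemma BSL.integrableOn_piece {F : ℝ → E} {B : Set ℝ} (hF : IntegrableOn F B volume) (i : Fin n) :
    IntegrableOn ((agentType n hn ⁻¹' {i}).indicator F) B volume :=
  hF.indicator ((BSL.measurable_agentType n hn) (MeasurableSet.singleton i))

lemma BSL.setIntegral_split {F : ℝ → E} {B : Set ℝ} (hB : MeasurableSet B)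
    (hF : IntegrableOn F B volume) :
    ∫ t in B, F t = ∑ i : Fin n, ∫ t in B ∩ (agentType n hn ⁻¹' {i}), F t := by
  have h1 : ∫ t in B, F t = ∫ t in B, (∑ i : Fin n, (agentType n hn ⁻¹' {i}).indicator F t) :=
    integral_congr_ae (Filter.Eventually.of_forall fun t => BSL.sum_indicator_decomp F t)
  rw [h1, integral_finset_sum _ (fun i _ => BSL.integrableOn_piece hF i)]
  refine Finset.sum_congr rfl fun i _ => ?_
  exact setIntegral_indicator ((BSL.measurable_agentType n hn) (MeasurableSet.singleton i))

lemma BSL.integrableOn_step (h : Fin n → E) {B : Set ℝ} (hB : MeasurableSet B)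
    (hBfin : volume B ≠ ⊤) : IntegrableOn (fun t => h (agentType n hn t)) B volume := by
  have h0 : IntegrableOn (fun t : ℝ =>
      ∑ i : Fin n, (agentType n hn ⁻¹' {i}).indicator (fun _ => h i) t) B volume := by
    refine integrable_finset_sum _ fun i _ => ?_
    exact (integrableOn_const hBfin).indicator
      ((BSL.measurable_agentType n hn) (MeasurableSet.singleton i))
  refine h0.congr (Filter.Eventually.of_forall fun t => ?_)
  exact (BSL.sum_indicator_decomp' (hn := hn) h t).symm

lemma BSL.setIntegral_step (h : Fin n → E) {B : Set ℝ} (hB : MeasurableSet B)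
    (hBfin : volume B ≠ ⊤) :
    ∫ t in B, h (agentType n hn t)
      = ∑ i : Fin n, (volume (B ∩ (agentType n hn ⁻¹' {i}))).toReal • h i := by
  rw [BSL.setIntegral_split (hn := hn) hB (BSL.integrableOn_step h hB hBfin)]
  refine Finset.sum_congr rfl fun i _ => ?_
  have hmeas : MeasurableSet (B ∩ (agentType n hn ⁻¹' {i})) :=
    hB.inter ((BSL.measurable_agentType n hn) (MeasurableSet.singleton i))
  have h1 : ∫ t in B ∩ (agentType n hn ⁻¹' {i}), h (agentType n hn t)
      = ∫ _ in B ∩ (agentType n hn ⁻¹' {i}), h i := by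
    refine setIntegral_congr_fun hmeas fun t ht => ?_
    simp only [Set.mem_inter_iff, Set.mem_preimage, Set.mem_singleton_iff] at ht
    rw [ht.2]
  rw [h1, setIntegral_const, measureReal_def]

end BSLStep

section BSLGoodSet
variable {Y : Type*} [NormedAddCommGroup Y] [Lattice Y] [HasSolidNorm Y]
  [IsOrderedAddMonoid Y] [NormedSpace ℝ Y]
variable {Ω S' : Type*} [Fintype Ω]
variable (U : Ω → Y → ℝ) (q : Ω → ℝ) (c : Ω → S')

/-- The closed convex "good set" of bundles. -/
def BSL.goodSet (r : ℝ) : Set (Ω → Y) :=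
  {x : Ω → Y | x ∈ measBundles c ∧ r ≤ expUtility U q x}

variable {U q c}

lemma BSL.expUtility_concave_combo
    (hq : ∀ ω, 0 < q ω) (hconc : ∀ ω, ConcaveOn ℝ {y : Y | 0 ≤ y} (U ω))
    {x y : Ω → Y} (hx : ∀ ω, 0 ≤ x ω) (hy : ∀ ω, 0 ≤ y ω)
    {α β : ℝ} (hα : 0 ≤ α) (hβ : 0 ≤ β) (hαβ : α + β = 1) :
    α * expUtility U q x + β * expUtility U q y ≤ expUtility U q (α • x + β • y) := by
  unfold expUtility
  rw [Finset.mul_sum, Finset.mul_sum, ← Finset.sum_add_distrib]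
  refine Finset.sum_le_sum fun ω _ => ?_
  have h := (hconc ω).2 (hx ω) (hy ω) hα hβ hαβ
  have hq' := (hq ω).le
  calc α * (q ω * U ω (x ω)) + β * (q ω * U ω (y ω))
      = q ω * (α • U ω (x ω) + β • U ω (y ω)) := by simp [smul_eq_mul]; ring
  _ ≤ q ω * U ω (α • x ω + β • y ω) := mul_le_mul_of_nonneg_left h hq'
  _ = q ω * U ω ((α • x + β • y) ω) := by simp

lemma BSL.goodSet_convex (hq : ∀ ω, 0 < q ω)
    (hconc : ∀ ω, ConcaveOn ℝ {y : Y | 0 ≤ y} (U ω)) (r : ℝ) :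
    Convex ℝ (BSL.goodSet U q c r) := by
  intro x hx y hy α β hα hβ hαβ
  obtain ⟨⟨hx0, hxc⟩, hxu⟩ := hx
  obtain ⟨⟨hy0, hyc⟩, hyu⟩ := hy
  refine ⟨⟨fun ω => ?_, fun ω ω' hcc => ?_⟩, ?_⟩
  · exact add_nonneg (BSL.real_smul_nonneg hα (hx0 ω)) (BSL.real_smul_nonneg hβ (hy0 ω))
  · simp only [Pi.add_apply, Pi.smul_apply, hxc ω ω' hcc, hyc ω ω' hcc]
  · calc r = α * r + β * r := by rw [← add_mul, hαβ, one_mul]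
    _ ≤ α * expUtility U q x + β * expUtility U q y := by
        exact add_le_add (mul_le_mul_of_nonneg_left hxu hα) (mul_le_mul_of_nonneg_left hyu hβ)
    _ ≤ expUtility U q (α • x + β • y) := BSL.expUtility_concave_combo hq hconc hx0 hy0 hα hβ hαβ

lemma BSL.expUtility_continuousOn (hcont : ∀ ω, ContinuousOn (U ω) {y : Y | 0 ≤ y}) :
    ContinuousOn (expUtility U q) {x : Ω → Y | ∀ ω, 0 ≤ x ω} := by
  unfold expUtility
  refine continuousOn_finset_sum _ fun ω _ => continuousOn_const.mul ?_
  refine ContinuousOn.comp (hcont ω) (continuous_apply ω).continuousOn ?_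
  intro x hx; exact hx ω

lemma BSL.goodSet_closed (hcont : ∀ ω, ContinuousOn (U ω) {y : Y | 0 ≤ y}) (r : ℝ) :
    IsClosed (BSL.goodSet U q c (S' := S') r) := by
  have hK : IsClosed ({x : Ω → Y | x ∈ measBundles c}) := by
    have h1 : IsClosed {x : Ω → Y | ∀ ω, 0 ≤ x ω} := by
      have h : {x : Ω → Y | ∀ ω, 0 ≤ x ω} = ⋂ ω, (fun x : Ω → Y => x ω) ⁻¹' {y : Y | 0 ≤ y} := by
        ext x; simp [Set.mem_iInter]
      rw [h]
      exact isClosed_iInter fun ω => IsClosed.preimage (continuous_apply ω) isClosed_nonneg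
    have h2 : IsClosed {x : Ω → Y | ∀ ω ω', c ω = c ω' → x ω = x ω'} := by
      have h : {x : Ω → Y | ∀ ω ω', c ω = c ω' → x ω = x ω'}
          = ⋂ ω, ⋂ ω', ⋂ (_ : c ω = c ω'), {x : Ω → Y | x ω = x ω'} := by
        ext x; simp [Set.mem_iInter]
      rw [h]
      exact isClosed_iInter fun ω => isClosed_iInter fun ω' => isClosed_iInter fun _ =>
        isClosed_eq (continuous_apply ω) (continuous_apply ω')
    exact h1.inter h2
  have hsub : {x : Ω → Y | x ∈ measBundles c} ⊆ {x : Ω → Y | ∀ ω, 0 ≤ x ω} := fun x hx => hx.1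
  have h : BSL.goodSet U q c (S' := S') r
      = {x : Ω → Y | x ∈ measBundles c} ∩ (expUtility U q) ⁻¹' (Set.Ici r) := rfl
  rw [h]
  exact ContinuousOn.preimage_isClosed_of_isClosed
    ((BSL.expUtility_continuousOn hcont).mono hsub) hK isClosed_Ici

end BSLGoodSet

set_option maxHeartbeats 1600000 in
/-- blocking scaling lemma: under continuity (A₁), concavity (A₃) and
strong positivity (A₅), if a step allocation `f` is privately blocked by some coalition in
`𝓔_c`, then it is privately blocked by a coalition `A` via a *step* function `g`, with a
uniform positive slack `z > 0` : `∫_A (a(t,ω) − g(t,ω)) dμ(t) ≥ z` for every `ω`. -/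
theorem blocking_scaling_lemma {Y : Type*} [NormedAddCommGroup Y] [Lattice Y]
    [HasSolidNorm Y] [IsOrderedAddMonoid Y]
    [NormedSpace ℝ Y] [CompleteSpace Y] {Ω S' : Type*} [Fintype Ω] {n : ℕ} (hn : 0 < n)
    (c : Fin n → Ω → S') (U : Fin n → Ω → Y → ℝ) (q : Fin n → Ω → ℝ)
    (a : Fin n → Ω → Y) (ha : ∀ i, a i ∈ measBundles (c i))
    -- priors are strictly positive
    (hq : ∀ i ω, 0 < q i ω)
    -- (A₁) continuity
    (hcont : ∀ i ω, ContinuousOn (U i ω) {y : Y | 0 ≤ y})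
    -- (A₃) concavity
    (hconc : ∀ i ω, ConcaveOn ℝ {y : Y | 0 ≤ y} (U i ω))
    -- (A₅) strong positivity
    (hpos : ∀ i, ∃ z : Y, 0 < z ∧ ∀ ω, z ≤ a i ω)
    -- `f` is a step allocation
    (f0 : Fin n → Ω → Y) (hf0 : ∀ i, f0 i ∈ measBundles (c i))
    -- `f` is privately blocked by some coalition
    (hblocked : ∃ A g, PrivatelyBlocks hn c U q a (fun t => f0 (agentType n hn t)) A g) :
    ∃ (A : Set ℝ) (g0 : Fin n → Ω → Y) (z : Y),
      PrivatelyBlocks hn c U q a (fun t => f0 (agentType n hn t)) A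
        (fun t => g0 (agentType n hn t)) ∧
      (∀ i, g0 i ∈ measBundles (c i)) ∧
      0 < z ∧
      ∀ ω, z ≤ ∫ t in A, (a (agentType n hn t) ω - g0 (agentType n hn t) ω) := by
  classical
  obtain ⟨A, g, hAmeas, hAsub, hApos, hgmem, hgpref, hgint, hgfeas⟩ := hblocked
  set τ := agentType n hn with hτ
  have hτmeas : Measurable τ := BSL.measurable_agentType n hn
  have hAfin : volume A ≠ ⊤ := by
    refine (lt_of_le_of_lt (measure_mono hAsub) ?_).ne
    simp [Real.volume_Icc]
  -- strongly measurable version of g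
  set sm : Ω → ℝ → Y := fun ω => ((hgint ω).1).mk _ with hsm
  have hsm_meas : ∀ ω, StronglyMeasurable (sm ω) := fun ω => ((hgint ω).1).stronglyMeasurable_mk
  have hae : ∀ ω, (fun t => g t ω) =ᵐ[volume.restrict A] sm ω := fun ω => ((hgint ω).1).ae_eq_mk
  set N : Set ℝ :=
    ⋃ ω, (toMeasurable (volume.restrict A) {t | g t ω ≠ sm ω t} ∩ A) with hN
  have hNmeas : MeasurableSet N :=
    MeasurableSet.iUnion fun ω => (measurableSet_toMeasurable _ _).inter hAmeas
  have hNnull : volume N = 0 := by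
    refine measure_iUnion_null fun ω => ?_
    have h1 : volume.restrict A (toMeasurable (volume.restrict A) {t | g t ω ≠ sm ω t}) = 0 := by
      rw [measure_toMeasurable]
      exact (hae ω)
    rwa [Measure.restrict_apply (measurableSet_toMeasurable _ _)] at h1
  set Astar : Set ℝ := A \ N with hAstar
  have hAstarmeas : MeasurableSet Astar := hAmeas.diff hNmeas
  have hAstarsub : Astar ⊆ A := Set.diff_subset
  have hAstarvol : volume Astar = volume A := measure_diff_null hNnull
  have hg_eq_sm : ∀ t ∈ Astar, ∀ ω, g t ω = sm ω t := by
    intro t ht ω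
    by_contra hne
    exact ht.2 (Set.mem_iUnion.mpr ⟨ω, ⟨subset_toMeasurable _ _ hne, ht.1⟩⟩)
  -- the pointwise-nonnegative strongly measurable version
  set g' : ℝ → Ω → Y := fun t ω => sm ω t ⊔ 0 with hg'
  have hg'_nonneg : ∀ t ω, (0:Y) ≤ g' t ω := fun t ω => le_sup_right
  have hg'_eq : ∀ t ∈ Astar, g' t = g t := by
    intro t ht; funext ω
    rw [hg']
    simp only
    rw [← hg_eq_sm t ht ω]
    exact sup_eq_left.mpr ((hgmem t (hAstarsub ht)).1 ω)
  have hg'_sm : ∀ ω, StronglyMeasurable (fun t => g' t ω) := fun ω =>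
    (hsm_meas ω).sup stronglyMeasurable_const
  have hrestrN : volume.restrict A N = 0 := by
    rw [Measure.restrict_apply hNmeas]
    exact measure_mono_null Set.inter_subset_left hNnull
  have hg'_ae : ∀ ω, (fun t => g t ω) =ᵐ[volume.restrict A] (fun t => g' t ω) := by
    intro ω
    have h1 : ∀ᵐ t ∂volume.restrict A, t ∉ N := by
      rw [ae_iff]
      simpa using hrestrN
    have h2 : ∀ᵐ t ∂volume.restrict A, t ∈ A := ae_restrict_mem hAmeas
    filter_upwards [h1, h2] with t ht1 ht2
    rw [hg'_eq t ⟨ht2, ht1⟩]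
  have hg'_int : ∀ ω, IntegrableOn (fun t => g' t ω) A volume := fun ω =>
    (hgint ω).congr (hg'_ae ω)
  -- type pieces
  set T : Fin n → Set ℝ := fun i => Astar ∩ τ ⁻¹' {i} with hT
  have hTmeas : ∀ i, MeasurableSet (T i) := fun i =>
    hAstarmeas.inter (hτmeas (MeasurableSet.singleton i))
  have hTsub : ∀ i, T i ⊆ Astar := fun i => Set.inter_subset_left
  have hTfin : ∀ i, volume (T i) ≠ ⊤ := fun i =>
    (lt_of_le_of_lt (measure_mono ((hTsub i).trans hAstarsub)) hAfin.lt_top).ne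
  have hTtype : ∀ i, ∀ t ∈ T i, τ t = i := fun i t ht => ht.2
  -- integrability of g' on pieces, coordinatewise and pi-valued
  have hg'_int_sub : ∀ (ω : Ω) {B : Set ℝ}, B ⊆ A → IntegrableOn (fun t => g' t ω) B volume :=
    fun ω B hB => (hg'_int ω).mono_set hB
  have hpiint : ∀ {B : Set ℝ}, B ⊆ A → IntegrableOn (fun t => g' t) B volume := by
    intro B hB
    have hdom : IntegrableOn (fun t => ∑ ω, ‖g' t ω‖) B volume :=
      integrable_finset_sum _ fun ω _ => (hg'_int_sub ω hB).norm
    refine Integrable.mono' hdom ?_ ?_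
    · exact BSL.aestronglyMeasurable_pi fun ω => (hg'_sm ω).aestronglyMeasurable
    · refine Filter.Eventually.of_forall fun t => ?_
      rw [pi_norm_le_iff_of_nonneg (Finset.sum_nonneg fun ω _ => norm_nonneg _)]
      intro ω
      exact Finset.single_le_sum (f := fun ω' => ‖g' t ω'‖)
        (fun ω' _ => norm_nonneg (g' t ω')) (Finset.mem_univ ω)
  -- expected utility abbreviations
  set V : Fin n → (Ω → Y) → ℝ := fun i => expUtility (U i) (q i) with hV
  set r : Fin n → ℝ := fun i => V i (f0 i) with hr
  have hVapp : ∀ (i : Fin n) (x : Ω → Y), V i x = expUtility (U i) (q i) x := fun i x => by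
    rw [hV]
  -- the measurable utility function
  have hφ_sm : ∀ i, StronglyMeasurable (fun t => V i (g' t)) := by
    intro i
    simp only [hVapp, expUtility]
    refine Finset.stronglyMeasurable_fun_sum _ fun ω _ => ?_
    exact stronglyMeasurable_const.mul
      (BSL.stronglyMeasurable_comp_cone (hg'_sm ω) (fun t => hg'_nonneg t ω) (hcont i ω))
  -- preference on `Astar`
  have hpref' : ∀ i, ∀ t ∈ T i, r i < V i (g' t) := by
    intro i t ht
    rw [hg'_eq t (hTsub i ht)]
    simp only [hr, hV]
    have h0 := hgpref t (hAstarsub (hTsub i ht))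
    simp only [hTtype i t ht] at h0
    exact h0
  -- the key per-type construction
  have key : ∀ i : Fin n, ∃ xb : Ω → Y, 0 < volume (T i) →
      (xb ∈ measBundles (c i) ∧ r i < V i xb ∧
        ∀ ω, (volume (T i)).toReal • xb ω = ∫ t in T i, g t ω) := by
    intro i
    by_cases hTi : 0 < volume (T i)
    swap
    · exact ⟨0, fun h => absurd h hTi⟩
    -- level sets
    set φ : ℝ → ℝ := fun t => V i (g' t) with hφ
    set C : ℕ → Set ℝ := fun m => T i ∩ {t | r i + (1:ℝ)/(m+1) ≤ φ t} with hC
    have hCmeas : ∀ m, MeasurableSet (C m) := by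
      intro m
      exact (hTmeas i).inter (measurableSet_le measurable_const (hφ_sm i).measurable)
    have hCunion : T i = ⋃ m, C m := by
      ext t
      constructor
      · intro ht
        have hlt : r i < φ t := hpref' i t ht
        obtain ⟨m, hm⟩ := exists_nat_one_div_lt (sub_pos.mpr hlt)
        refine Set.mem_iUnion.mpr ⟨m, ht, ?_⟩
        simp only [Set.mem_setOf_eq]
        push_cast
        linarith [hm]
      · intro ht
        obtain ⟨m, hm⟩ := Set.mem_iUnion.mp ht
        exact hm.1
    have hCex : ∃ m, 0 < volume (C m) := by
      by_contra hno
      push_neg at hno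
      have h1 : volume (T i) = 0 := by
        rw [hCunion]
        exact measure_iUnion_null fun m => le_antisymm (hno m) zero_le
      exact absurd h1 hTi.ne'
    obtain ⟨m, hCm⟩ := hCex
    set δ : ℝ := (1:ℝ)/(m+1) with hδ
    have hδpos : 0 < δ := by positivity
    have hCsub : C m ⊆ T i := Set.inter_subset_left
    have hCfin : volume (C m) ≠ ⊤ :=
      (lt_of_le_of_lt (measure_mono (hCsub.trans ((hTsub i).trans hAstarsub))) hAfin.lt_top).ne
    -- membership of g' in good sets
    have hmemT : ∀ t ∈ T i, g' t ∈ BSL.goodSet (U i) (q i) (c i) (r i) := by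
      intro t ht
      refine ⟨?_, ?_⟩
      swap
      · rw [← hVapp]
        exact (hpref' i t ht).le
      rw [hg'_eq t (hTsub i ht)]
      have h0 := hgmem t (hAstarsub (hTsub i ht))
      simp only [hTtype i t ht] at h0
      exact h0
    have hmemC : ∀ t ∈ C m, g' t ∈ BSL.goodSet (U i) (q i) (c i) (r i + δ) := by
      intro t ht
      exact ⟨(hmemT t (hCsub ht)).1, ht.2⟩
    have hconvex := BSL.goodSet_convex (c := c i) (hq i) (hconc i)
    have hclosed := BSL.goodSet_closed (c := c i) (q := q i) (S' := S') (hcont i)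
    -- averages
    have hu : (⨍ t in C m, g' t ∂volume) ∈ BSL.goodSet (U i) (q i) (c i) (r i + δ) := by
      refine Convex.set_average_mem (hconvex _) (hclosed _) hCm.ne' hCfin ?_
        (hpiint (hCsub.trans ((hTsub i).trans hAstarsub)))
      filter_upwards [ae_restrict_mem (hCmeas m)] with t ht
      exact hmemC t ht
    have hxbar_mem : (⨍ t in T i, g' t ∂volume) ∈ BSL.goodSet (U i) (q i) (c i) (r i) := by
      refine Convex.set_average_mem (hconvex _) (hclosed _) hTi.ne' (hTfin i) ?_
        (hpiint ((hTsub i).trans hAstarsub))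
      filter_upwards [ae_restrict_mem (hTmeas i)] with t ht
      exact hmemT t ht
    set xbar : Ω → Y := ⨍ t in T i, g' t ∂volume with hxbar
    -- strict inequality
    have hstrict : r i < V i xbar := by
      by_cases hD : volume (T i \ C m) = 0
      · -- the average equals the average over C m
        have hsets : T i =ᵐ[volume] C m :=
          ae_eq_set.mpr ⟨hD, by rw [Set.diff_eq_empty.mpr hCsub]; simp⟩
        have hxx : xbar = ⨍ t in C m, g' t ∂volume := by
          rw [hxbar, setAverage_eq, setAverage_eq, setIntegral_congr_set hsets,
            measureReal_congr hsets]
        rw [hxx, hVapp]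
        calc r i < r i + δ := by linarith
        _ ≤ expUtility (U i) (q i) (⨍ t in C m, g' t ∂volume) := hu.2
      · have hDmeas : MeasurableSet (T i \ C m) := (hTmeas i).diff (hCmeas m)
        have hDfin : volume (T i \ C m) ≠ ⊤ :=
          (lt_of_le_of_lt (measure_mono (Set.diff_subset.trans
            ((hTsub i).trans hAstarsub))) hAfin.lt_top).ne
        have hv : (⨍ t in T i \ C m, g' t ∂volume) ∈ BSL.goodSet (U i) (q i) (c i) (r i) := by
          refine Convex.set_average_mem (hconvex _) (hclosed _) hD hDfin ?_
            (hpiint (Set.diff_subset.trans ((hTsub i).trans hAstarsub)))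
          filter_upwards [ae_restrict_mem hDmeas] with t ht
          exact hmemT t ht.1
        set u : Ω → Y := ⨍ t in C m, g' t ∂volume with hudef
        set v : Ω → Y := ⨍ t in T i \ C m, g' t ∂volume with hvdef
        set aR : ℝ := (volume (C m)).toReal with haR
        set bR : ℝ := (volume (T i \ C m)).toReal with hbR
        have haRpos : 0 < aR := ENNReal.toReal_pos hCm.ne' hCfin
        have hbRpos : 0 < bR := ENNReal.toReal_pos hD hDfin
        have hmeasadd : volume (T i) = volume (C m) + volume (T i \ C m) := by
          rw [← measure_union disjoint_sdiff_self_right hDmeas,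
            Set.union_diff_cancel hCsub]
        have habR : (volume (T i)).toReal = aR + bR := by
          rw [hmeasadd, ENNReal.toReal_add hCfin hDfin]
        have hsplit : (∫ t in T i, g' t ∂volume)
            = (∫ t in C m, g' t ∂volume) + ∫ t in T i \ C m, g' t ∂volume := by
          rw [← setIntegral_union disjoint_sdiff_self_right hDmeas
            (hpiint (hCsub.trans ((hTsub i).trans hAstarsub)))
            (hpiint (Set.diff_subset.trans ((hTsub i).trans hAstarsub))),
            Set.union_diff_cancel hCsub]
        set θ : ℝ := aR / (aR + bR) with hθ
        have hθpos : 0 < θ := by positivity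
        have hθ1 : θ ≤ 1 := by
          rw [hθ, div_le_one (by positivity)]; linarith
        have hs1 : θ * aR⁻¹ = (aR + bR)⁻¹ := by
          rw [hθ, div_mul_eq_mul_div, mul_inv_cancel₀ haRpos.ne', one_div]
        have hs2 : (1 - θ) * bR⁻¹ = (aR + bR)⁻¹ := by
          rw [hθ, one_sub_div (by positivity), add_sub_cancel_left,
            div_mul_eq_mul_div, mul_inv_cancel₀ hbRpos.ne', one_div]
        have hcombo : xbar = θ • u + (1 - θ) • v := by
          rw [hxbar, setAverage_eq, measureReal_def, habR, hsplit, hudef, hvdef, setAverage_eq, setAverage_eq,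
            measureReal_def, measureReal_def,
            ← haR, ← hbR, smul_add, smul_smul, smul_smul, hs1, hs2]
        have hcc := BSL.expUtility_concave_combo (hq i) (hconc i)
          (fun ω => hu.1.1 ω) (fun ω => hv.1.1 ω) hθpos.le (by linarith : (0:ℝ) ≤ 1 - θ)
          (by ring)
        have hfin : θ * (r i + δ) + (1 - θ) * (r i) ≤ V i xbar := by
          rw [hcombo, hVapp]
          refine le_trans ?_ hcc
          exact add_le_add (mul_le_mul_of_nonneg_left hu.2 hθpos.le)
            (mul_le_mul_of_nonneg_left hv.2 (by linarith))
        nlinarith [hθpos, hδpos, hfin]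
    -- the coordinates of the average
    have hcoord : ∀ ω, (volume (T i)).toReal • xbar ω = ∫ t in T i, g t ω := by
      intro ω
      have hproj : (∫ t in T i, g' t ∂volume) ω = ∫ t in T i, g' t ω ∂volume := by
        have h0 := (ContinuousLinearMap.proj (R := ℝ) (φ := fun _ : Ω => Y) ω).integral_comp_comm
          (hpiint ((hTsub i).trans hAstarsub))
        exact h0.symm
      have h1 : xbar ω = (volume (T i)).toReal⁻¹ • ∫ t in T i, g' t ω ∂volume := by
        rw [hxbar, setAverage_eq, Pi.smul_apply, hproj, measureReal_def]
      have h2 : (∫ t in T i, g' t ω ∂volume) = ∫ t in T i, g t ω ∂volume := by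
        refine setIntegral_congr_fun (hTmeas i) fun t ht => ?_
        rw [hg'_eq t (hTsub i ht)]
      rw [h1, h2, smul_smul, mul_inv_cancel₀
        (ENNReal.toReal_pos hTi.ne' (hTfin i)).ne', one_smul]
    exact ⟨xbar, fun _ => ⟨hxbar_mem.1, hstrict, hcoord⟩⟩
  choose xb hxb using key
  -- the positive-measure types and blocking coalition
  set Gset : Set (Fin n) := {i | 0 < volume (T i)} with hGset
  set A' : Set ℝ := Astar ∩ τ ⁻¹' Gset with hA'
  have hA'meas : MeasurableSet A' := hAstarmeas.inter (hτmeas (Set.toFinite Gset).measurableSet)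
  have hA'subAstar : A' ⊆ Astar := Set.inter_subset_left
  have hA'subA : A' ⊆ A := hA'subAstar.trans hAstarsub
  have hAstarA'null : volume (Astar \ A') = 0 := by
    refine measure_mono_null (fun t ht => ?_) (measure_iUnion_null (ι := Fin n)
      (s := fun i => if i ∈ Gset then ∅ else T i) fun i => ?_)
    · refine Set.mem_iUnion.mpr ⟨τ t, ?_⟩
      have hτt : τ t ∉ Gset := fun hmem => ht.2 ⟨ht.1, hmem⟩
      simp only [if_neg hτt]
      exact ⟨ht.1, rfl⟩
    · by_cases hi : i ∈ Gset
      · simp [hi]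
      · simp only [if_neg hi]
        exact le_antisymm (le_of_not_gt hi) zero_le
  have hA'vol : volume A' = volume A := by
    have h1 : A' = Astar \ (Astar \ A') := (Set.diff_diff_cancel_left hA'subAstar).symm
    rw [h1, measure_diff_null hAstarA'null, hAstarvol]
  have hA'pos : 0 < volume A' := hA'vol ▸ hApos
  have hA'fin : volume A' ≠ ⊤ := hA'vol ▸ hAfin
  have hAA' : A' =ᵐ[volume] A := by
    refine ae_eq_set.mpr ⟨?_, ?_⟩
    · rw [Set.diff_eq_empty.mpr hA'subA]; simp
    · refine measure_mono_null (fun t ht => ?_) (measure_union_null hNnull hAstarA'null)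
      by_cases hN' : t ∈ N
      · exact Or.inl hN'
      · exact Or.inr ⟨⟨ht.1, hN'⟩, ht.2⟩
  -- the types in A' are exactly Gset
  have hA'type : ∀ t ∈ A', τ t ∈ Gset := fun t ht => ht.2
  have hA'piece : ∀ i : Fin n, A' ∩ τ ⁻¹' {i} = if i ∈ Gset then T i else ∅ := by
    intro i
    by_cases hi : i ∈ Gset
    · rw [if_pos hi]
      ext t
      constructor
      · intro ht; exact ⟨ht.1.1, ht.2⟩
      · intro ht
        have hti : τ t = i := ht.2
        exact ⟨⟨ht.1, Set.mem_preimage.mpr (by rw [hti]; exact hi)⟩, ht.2⟩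
    · rw [if_neg hi]
      ext t
      simp only [Set.mem_inter_iff, Set.mem_preimage, Set.mem_singleton_iff,
        Set.mem_empty_iff_false, iff_false, not_and]
      rintro ⟨_, hmem⟩ hti
      exact hi (hti ▸ hmem)
  -- choice of the scaling factor
  have hev : ∀ᶠ k : ℕ in Filter.atTop, ∀ i : Fin n, 0 < volume (T i) →
      r i < V i ((1 - 1/((k:ℝ)+1)) • xb i) := by
    rw [Filter.eventually_all]
    intro i
    by_cases hi : 0 < volume (T i)
    swap
    · exact Filter.Eventually.of_forall fun k h => absurd h hi
    have hmem := (hxb i hi).1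
    have hstrict := (hxb i hi).2.1
    have hlam : Filter.Tendsto (fun k : ℕ => 1 - 1/((k:ℝ)+1)) Filter.atTop (nhds 1) := by
      have h0 := tendsto_one_div_add_atTop_nhds_zero_nat (𝕜 := ℝ)
      have h1 := (tendsto_const_nhds (x := (1:ℝ)) (f := Filter.atTop (α := ℕ))).sub h0
      simpa using h1
    have hVt : Filter.Tendsto (fun k : ℕ => V i ((1 - 1/((k:ℝ)+1)) • xb i))
        Filter.atTop (nhds (V i (xb i))) := by
      simp only [hVapp, expUtility]
      refine tendsto_finset_sum _ fun ω _ => Filter.Tendsto.const_mul _ ?_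
      have harg : Filter.Tendsto (fun k : ℕ => (1 - 1/((k:ℝ)+1)) • xb i ω)
          Filter.atTop (nhds (xb i ω)) := by
        have h2 := hlam.smul_const (xb i ω)
        simpa using h2
      have hmemk : ∀ k : ℕ, (1 - 1/((k:ℝ)+1)) • xb i ω ∈ {y : Y | 0 ≤ y} := by
        intro k
        refine BSL.real_smul_nonneg ?_ (hmem.1 ω)
        have h3 : (1:ℝ)/((k:ℝ)+1) ≤ 1 := by
          rw [div_le_one (by positivity)]
          have : (0:ℝ) ≤ (k:ℝ) := Nat.cast_nonneg k
          linarith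
        linarith
      have hcw : Filter.Tendsto (fun k : ℕ => (1 - 1/((k:ℝ)+1)) • xb i ω)
          Filter.atTop (nhdsWithin (xb i ω) {y : Y | 0 ≤ y}) := by
        rw [tendsto_nhdsWithin_iff]
        exact ⟨harg, Filter.Eventually.of_forall hmemk⟩
      exact ((hcont i ω (xb i ω) (hmem.1 ω)).tendsto.comp hcw).congr fun k => by
        simp [Pi.smul_apply]
    exact (hVt.eventually (eventually_gt_nhds hstrict)).mono fun k h _ => h
  obtain ⟨k, hk⟩ := hev.exists
  set ε : ℝ := 1/((k:ℝ)+1) with hε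
  have hεpos : 0 < ε := by positivity
  have hε1 : ε ≤ 1 := by
    rw [hε, div_le_one (by positivity)]
    have : (0:ℝ) ≤ (k:ℝ) := Nat.cast_nonneg k
    linarith
  set lam : ℝ := 1 - ε with hlamdef
  have hlam0 : 0 ≤ lam := by rw [hlamdef]; linarith
  -- the blocking step bundle
  set g0 : Fin n → Ω → Y := fun i => if 0 < volume (T i) then lam • xb i else a i with hg0
  have hg0mem : ∀ i, g0 i ∈ measBundles (c i) := by
    intro i
    rw [hg0]
    by_cases hi : 0 < volume (T i)
    · simp only [if_pos hi]
      have hmem := (hxb i hi).1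
      exact ⟨fun ω => BSL.real_smul_nonneg hlam0 (hmem.1 ω),
        fun ω ω' hcc => by simp only [Pi.smul_apply, hmem.2 ω ω' hcc]⟩
    · simp only [if_neg hi]; exact ha i
  -- the slack element
  set zf : Fin n → Y := fun i => Classical.choose (hpos i) with hzf
  have hzf_spec : ∀ i, 0 < zf i ∧ ∀ ω, zf i ≤ a i ω := fun i => Classical.choose_spec (hpos i)
  set z : Y := ε • ∑ i : Fin n, (volume (T i)).toReal • zf i with hz
  have hGex : ∃ i : Fin n, 0 < volume (T i) := by
    by_contra hno
    push_neg at hno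
    have h1 : volume Astar = 0 := by
      refine measure_mono_null (fun t ht => ?_)
        (measure_iUnion_null (s := T) fun i => le_antisymm (hno i) zero_le)
      exact Set.mem_iUnion.mpr ⟨τ t, ht, rfl⟩
    rw [hAstarvol] at h1
    exact absurd h1 hApos.ne'
  obtain ⟨i₀, hi₀⟩ := hGex
  have hzpos : 0 < z := by
    refine BSL.real_smul_pos hεpos ?_
    refine Finset.sum_pos' (fun i _ => BSL.real_smul_nonneg ENNReal.toReal_nonneg
      (hzf_spec i).1.le) ⟨i₀, Finset.mem_univ _, ?_⟩
    exact BSL.real_smul_pos (ENNReal.toReal_pos hi₀.ne' (hTfin i₀)) (hzf_spec i₀).1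
  -- K1 : the integral of g0 over A' equals lam • ∫_{A'} g
  have hK1 : ∀ ω, ∫ t in A', g0 (τ t) ω = lam • ∫ t in A', g t ω := by
    intro ω
    have hL : ∫ t in A', g0 (τ t) ω
        = ∑ i : Fin n, (volume (A' ∩ τ ⁻¹' {i})).toReal • g0 i ω :=
      BSL.setIntegral_step (hn := hn) (fun i => g0 i ω) hA'meas hA'fin
    have hR : ∫ t in A', g t ω = ∑ i : Fin n, ∫ t in A' ∩ τ ⁻¹' {i}, g t ω :=
      BSL.setIntegral_split (hn := hn) hA'meas ((hgint ω).mono_set hA'subA)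
    rw [hL, hR, Finset.smul_sum]
    refine Finset.sum_congr rfl fun i _ => ?_
    rw [hA'piece i]
    by_cases hi : i ∈ Gset
    · rw [if_pos hi]
      have hGi : 0 < volume (T i) := hi
      have h3 := (hxb i hGi).2.2 ω
      rw [hg0]
      simp only [if_pos hGi, Pi.smul_apply]
      rw [smul_comm, h3]
    · rw [if_neg hi]
      simp
  -- main feasibility bound with slack
  have hslack : ∀ ω, (∫ t in A', g0 (τ t) ω) + z ≤ ∫ t in A', a (τ t) ω := by
    intro ω
    have h1 : ∫ t in A', g0 (τ t) ω = lam • ∫ t in A, g t ω := by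
      rw [hK1 ω, setIntegral_congr_set hAA']
    have h2 : ∫ t in A', a (τ t) ω = ∫ t in A, a (τ t) ω :=
      setIntegral_congr_set hAA'
    set Ia : Y := ∫ t in A, a (τ t) ω with hIadef
    set Ig : Y := ∫ t in A, g t ω with hIgdef
    have hfeas : Ig ≤ Ia := hgfeas ω
    have h3 : lam • Ig ≤ lam • Ia := BSL.real_smul_le_smul hlam0 hfeas
    have h4 : z ≤ ε • Ia := by
      rw [hz]
      refine BSL.real_smul_le_smul hεpos.le ?_
      rw [hIadef, BSL.setIntegral_step (hn := hn) (fun i => a i ω) hAmeas hAfin]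
      refine Finset.sum_le_sum fun i _ => ?_
      have hsub2 : T i ⊆ A ∩ τ ⁻¹' {i} :=
        Set.inter_subset_inter_left _ hAstarsub
      have hc12 : (volume (T i)).toReal ≤ (volume (A ∩ τ ⁻¹' {i})).toReal :=
        ENNReal.toReal_mono (lt_of_le_of_lt (measure_mono Set.inter_subset_left)
          hAfin.lt_top).ne (measure_mono hsub2)
      calc (volume (T i)).toReal • zf i
          ≤ (volume (T i)).toReal • a i ω :=
            BSL.real_smul_le_smul ENNReal.toReal_nonneg ((hzf_spec i).2 ω)
      _ ≤ (volume (A ∩ τ ⁻¹' {i})).toReal • a i ω := by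
            rw [← sub_nonneg, ← sub_smul]
            exact BSL.real_smul_nonneg (by linarith) ((ha i).1 ω)
    have h5 : lam • Ia + ε • Ia = Ia := by
      rw [← add_smul, hlamdef]
      norm_num
    calc (∫ t in A', g0 (τ t) ω) + z = lam • Ig + z := by rw [h1]
    _ ≤ lam • Ia + ε • Ia := add_le_add h3 h4
    _ = Ia := h5
    _ = ∫ t in A', a (τ t) ω := h2.symm
  -- assemble everything
  refine ⟨A', g0, z, ⟨hA'meas, hA'subA.trans hAsub, hA'pos, ?_, ?_, ?_, ?_⟩, hg0mem, hzpos, ?_⟩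
  · intro t _
    exact hg0mem (τ t)
  · intro t ht
    have hGt : 0 < volume (T (τ t)) := hA'type t ht
    have h6 := hk (τ t) hGt
    simp only [hr, hV] at h6
    simp only [hg0, if_pos hGt]
    exact h6
  · intro ω
    exact BSL.integrableOn_step (hn := hn) (fun i => g0 i ω) hA'meas hA'fin
  · intro ω
    have h7 := hslack ω
    have hz0 : (0:Y) ≤ z := hzpos.le
    calc ∫ t in A', g0 (τ t) ω ≤ (∫ t in A', g0 (τ t) ω) + z := le_add_of_nonneg_right hz0
    _ ≤ ∫ t in A', a (τ t) ω := h7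
  · intro ω
    have h6 : ∫ t in A', (a (τ t) ω - g0 (τ t) ω)
        = (∫ t in A', a (τ t) ω) - ∫ t in A', g0 (τ t) ω :=
      integral_sub (BSL.integrableOn_step (hn := hn) (fun i => a i ω) hA'meas hA'fin)
        (BSL.integrableOn_step (hn := hn) (fun i => g0 i ω) hA'meas hA'fin)
    rw [h6, le_sub_iff_add_le, add_comm]
    exact hslack ω
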